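/- There exist constants δ > 0 and c > 0 such that for every sufficiently large positive integer n, there exists a nonempty subset S ⊆ {0,1}^n such that the uniform distribution D on S satisfies TV(X, D) ≥ 1 − 2^{−cn} for every 𝔽₂-polynomial source X on {0,1}^n of degree at most δn (with any number of input variables). -/

import Mathlib

open Finset

/-- The uniform distribution on a finite type. -/
noncomputable def unif (α : Type*) [Fintype α] : α → ℝ := fun _ => (Fintype.card α : ℝ)⁻¹

/-- `p` is a probability distribution on the finite type `α`. -/
def IsDist {α : Type*} [Fintype α] (p : α → ℝ) : Prop :=
  (∀ a, 0 ≤ p a) ∧ ∑ a, p a = 1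

open scoped Classical in
/-- Probability that a sample from `p` lands in the event `E`. -/
noncomputable def prob {α : Type*} [Fintype α] (p : α → ℝ) (E : Set α) : ℝ :=
  ∑ a, if a ∈ E then p a else 0

/-- Total variation distance between two distributions on a finite type. -/
noncomputable def tv {α : Type*} [Fintype α] (p q : α → ℝ) : ℝ :=
  (∑ a, |p a - q a|) / 2

open scoped Classical in
/-- Pushforward of the distribution `p` under the map `f`. -/
noncomputable def push {α β : Type*} [Fintype α] (f : α → β) (p : α → ℝ) : β → ℝ :=
  fun b => ∑ a, if f a = b then p a else 0

/-- `H∞(p) ≥ k`, i.e. every point has mass at most `2 ^ (-k)`. -/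
def MinEntropyGE {α : Type*} (p : α → ℝ) (k : ℝ) : Prop :=
  ∀ a, p a ≤ (2 : ℝ) ^ (-k)

/-- `(a, b, k)`-isolator for the class `𝒳` of distributions on the finite type `α`:
`Iso` outputs `1` with probability at least `a` on the uniform distribution, and for every
`X ∈ 𝒳`, the probability that a sample of `X` is a light point (mass at most `2^(-k)`)
on which `Iso` outputs `1` is at most `b`. -/
def IsIsolator {α : Type*} [Fintype α] (𝒳 : Set (α → ℝ)) (Iso : α → Bool)
    (a b k : ℝ) : Prop :=
  a ≤ prob (unif α) {x | Iso x = true} ∧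
  ∀ X ∈ 𝒳, prob X {x | X x ≤ (2 : ℝ) ^ (-k) ∧ Iso x = true} ≤ b

/-- `(ε, k)`-extractor (outputting `m` bits) for the class `𝒳`. -/
def IsExtractor {α : Type*} [Fintype α] {m : ℕ} (𝒳 : Set (α → ℝ))
    (Ext : α → Fin m → Bool) (ε k : ℝ) : Prop :=
  ∀ X ∈ 𝒳, MinEntropyGE X k → tv (push Ext X) (unif (Fin m → Bool)) ≤ ε

/-- Identify `Bool` with `𝔽₂`. -/
def b2f (b : Bool) : ZMod 2 := if b then 1 else 0

/-- Degree-`d` polynomial sources on `𝔽₂^n` with exactly `r` input variables: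
pushforwards of the uniform distribution on `𝔽₂^r` under an `n`-tuple of
`𝔽₂`-polynomials of total degree at most `d`. -/
def polySourceExact (d r n : ℕ) : Set ((Fin n → Bool) → ℝ) :=
  {X | ∃ P : Fin n → MvPolynomial (Fin r) (ZMod 2),
    (∀ i, (P i).totalDegree ≤ d) ∧
    X = push (fun u i => decide (MvPolynomial.eval (fun j => b2f (u j)) (P i) = 1))
          (unif (Fin r → Bool))}

/-- Degree-`d` polynomial sources on `𝔽₂^n` with any (positive) number of input variables. -/
def polySource (d n : ℕ) : Set ((Fin n → Bool) → ℝ) :=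
  {X | ∃ r : ℕ, 0 < r ∧ X ∈ polySourceExact d r n}
namespace Stmt19

/-- distribution of the image of the uniform distribution under `g`. -/
noncomputable def distOf {W β : Type*} [Fintype W] [DecidableEq β] [Fintype β] (g : W → β) :
    β → ℝ :=
  fun x => ((Finset.univ.filter (fun w => g w = x)).card : ℝ) / (Fintype.card W)

lemma distOf_nonneg {W β : Type*} [Fintype W] [DecidableEq β] [Fintype β] (g : W → β) (x : β) :
    0 ≤ distOf g x := by
  unfold distOf; positivity

lemma card_fiber_sum {W β : Type*} [Fintype W] [DecidableEq β] [Fintype β] (g : W → β) :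
    ∑ x, ((Finset.univ.filter (fun w => g w = x)).card) = Fintype.card W := by
  rw [← Finset.card_univ,
    Finset.card_eq_sum_card_fiberwise (f := g) (t := Finset.univ) (fun w _ => Finset.mem_univ _)]

lemma sum_distOf {W β : Type*} [Fintype W] [DecidableEq β] [Fintype β] [Nonempty W] (g : W → β) :
    ∑ x, distOf g x = 1 := by
  unfold distOf
  rw [← Finset.sum_div]
  rw [show ∑ x, ((Finset.univ.filter (fun w => g w = x)).card : ℝ) = (Fintype.card W : ℝ) by
    rw [← Nat.cast_sum]; exact congrArg Nat.cast (card_fiber_sum g)]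
  exact div_self (by positivity)

lemma sum_ite_const {W : Type*} [Fintype W] (p : W → Prop) [DecidablePred p] (c : ℝ) :
    (∑ a, if p a then c else 0) = ((Finset.univ.filter p).card : ℝ) * c := by
  rw [← Finset.sum_filter, Finset.sum_const, nsmul_eq_mul]

lemma push_apply {α β : Type*} [Fintype α] (f : α → β) (p : α → ℝ) (b : β)
    [DecidablePred (fun a => f a = b)] : push f p b = ∑ a, if f a = b then p a else 0 := by
  unfold push
  exact Finset.sum_congr rfl fun a _ => by congr

lemma push_unif_eq_distOf {W β : Type*} [Fintype W] [DecidableEq β] [Fintype β] (g : W → β) :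
    push g (unif W) = distOf g := by
  funext x
  rw [push_apply]
  unfold unif distOf
  rw [sum_ite_const (p := fun w => g w = x)]
  rw [div_eq_mul_inv]

lemma distOf_comp_equiv {W W' β : Type*} [Fintype W] [Fintype W'] [DecidableEq β] [Fintype β]
    (g : W → β) (e : W' ≃ W) : distOf (fun w' => g (e w')) = distOf g := by
  funext x
  unfold distOf
  congr 1
  · congr 1
    apply Finset.card_bij (fun w' _ => e w')
    · intro a ha; simp at ha ⊢; exact ha
    · intro a _ b _ h; exact e.injective h
    · intro b hb; exact ⟨e.symm b, by simpa using hb, by simp⟩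
  · simp [Fintype.card_congr e]

lemma abs_sub_eq_add_sub_two_min (a b : ℝ) : |a - b| = a + b - 2 * min a b := by
  rcases le_total a b with h | h
  · rw [abs_of_nonpos (by linarith), min_eq_left h]; ring
  · rw [abs_of_nonneg (by linarith), min_eq_right h]; ring

/-- For two probability distributions, `tv p q = 1 - ∑ min`. -/
lemma tv_eq_one_sub_min {α : Type*} [Fintype α] (p q : α → ℝ)
    (hp : ∑ a, p a = 1) (hq : ∑ a, q a = 1) :
    tv p q = 1 - ∑ a, min (p a) (q a) := by
  unfold tv
  rw [show ∑ a, |p a - q a| = ∑ a, (p a + q a - 2 * min (p a) (q a)) from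
    Finset.sum_congr rfl fun a _ => abs_sub_eq_add_sub_two_min _ _]
  rw [Finset.sum_sub_distrib, Finset.sum_add_distrib, hp, hq, ← Finset.mul_sum]
  ring

lemma tv_triangle {α : Type*} [Fintype α] (p q r : α → ℝ) : tv p r ≤ tv p q + tv q r := by
  unfold tv
  rw [← add_div]
  gcongr
  rw [← Finset.sum_add_distrib]
  exact Finset.sum_le_sum fun a _ => abs_sub_le _ _ _

lemma tv_comm {α : Type*} [Fintype α] (p q : α → ℝ) : tv p q = tv q p := by
  unfold tv; congr 1; exact Finset.sum_congr rfl fun a _ => abs_sub_comm _ _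

end Stmt19
namespace Stmt19

abbrev F2 := ZMod 2

lemma b2f_decide (z : F2) : b2f (decide (z = 1)) = z := by revert z; decide

def e2 : Bool ≃ F2 where
  toFun := b2f
  invFun := fun z => decide (z = 1)
  left_inv := by intro b; cases b <;> rfl
  right_inv := b2f_decide

def eVec (r : ℕ) : (Fin r → Bool) ≃ (Fin r → F2) := Equiv.piCongrRight fun _ => e2

/-- The boolean map computed by a tuple of polynomials, with `𝔽₂` inputs. -/
noncomputable def fzP {r n : ℕ} (P : Fin n → MvPolynomial (Fin r) F2) : (Fin r → F2) → (Fin n → Bool) :=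
  fun w i => decide (MvPolynomial.eval w (P i) = 1)

lemma source_eq_distOf {r n : ℕ} (P : Fin n → MvPolynomial (Fin r) F2) :
    push (fun u i => decide (MvPolynomial.eval (fun j => b2f (u j)) (P i) = 1))
        (unif (Fin r → Bool)) = distOf (fzP P) := by
  rw [push_unif_eq_distOf]
  exact distOf_comp_equiv (fzP P) (eVec r)

lemma card_f2vec (r : ℕ) : Fintype.card (Fin r → F2) = 2^r := by
  simp [ZMod]

-- ### counting lemmas for random affine maps

abbrev Om (r m : ℕ) := (Fin r → Fin m → F2) × (Fin r → F2)

/-- The affine map given by `ω`. -/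
def Lz {r m : ℕ} (ω : Om r m) : (Fin m → F2) → (Fin r → F2) :=
  fun v j => (∑ k, ω.1 j k * v k) + ω.2 j

lemma card_Om (r m : ℕ) : Fintype.card (Om r m) = (2^m)^r * 2^r := by
  simp [ZMod, Fintype.card_fun]

lemma row_count {m : ℕ} (e : Fin m → F2) (he : e ≠ 0) (c : F2) :
    (Finset.univ.filter (fun row : Fin m → F2 => ∑ k, row k * e k = c)).card * 2 = 2^m := by
  obtain ⟨k₀, hk₀⟩ : ∃ k₀, e k₀ ≠ 0 := by
    by_contra h; push_neg at h; exact he (funext fun k => h k)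
  have hek : e k₀ = 1 := by revert hk₀; generalize e k₀ = z; revert z; decide
  set φ : (Fin m → F2) → (Fin m → F2) := fun row => Function.update row k₀ (row k₀ + 1) with hφ
  have hsum : ∀ row : Fin m → F2, ∑ k, φ row k * e k = (∑ k, row k * e k) + 1 := by
    intro row
    have h1 : (fun k => φ row k * e k) = Function.update (fun k => row k * e k) k₀
        ((row k₀ + 1) * e k₀) := by
      funext k
      by_cases hk : k = k₀
      · subst hk; simp [hφ, Function.update]
      · simp [hφ, Function.update, hk]
    rw [h1, Finset.sum_update_of_mem (Finset.mem_univ _),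
      show (∑ k, row k * e k) = row k₀ * e k₀ + ∑ k ∈ Finset.univ \ {k₀}, row k * e k from
        (Finset.sum_eq_add_sum_sdiff_singleton_of_mem (Finset.mem_univ k₀) _)]
    rw [hek]
    ring
  have hinv : ∀ row, φ (φ row) = row := by
    intro row
    funext k
    by_cases hk : k = k₀
    · subst hk
      simp [hφ, Function.update]
      generalize row k = z; revert z; decide
    · simp [hφ, Function.update, hk]
  have hbij : ∀ c' : F2,
      (Finset.univ.filter (fun row : Fin m → F2 => ∑ k, row k * e k = c')).card =
      (Finset.univ.filter (fun row : Fin m → F2 => ∑ k, row k * e k = c' + 1)).card := by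
    intro c' 
    apply Finset.card_bij' (fun row _ => φ row) (fun row _ => φ row)
    · intro a ha; simp only [Finset.mem_filter, Finset.mem_univ, true_and] at ha ⊢
      rw [hsum, ha]
    · intro a ha; simp only [Finset.mem_filter, Finset.mem_univ, true_and] at ha ⊢
      rw [hsum, ha]
      generalize c' = z; revert z; decide
    · intro a _; exact hinv a
    · intro a _; exact hinv a
  have hsplit : (Finset.univ.filter (fun row : Fin m → F2 => ∑ k, row k * e k = 0)).card +
      (Finset.univ.filter (fun row : Fin m → F2 => ∑ k, row k * e k = 1)).card = 2^m := by
    rw [show (Finset.univ.filter (fun row : Fin m → F2 => ∑ k, row k * e k = 1)) =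
        (Finset.univ.filter (fun row : Fin m → F2 => ¬ (∑ k, row k * e k = 0))) from
      Finset.filter_congr fun row _ => by
        generalize (∑ k, row k * e k) = z; revert z; decide]
    rw [Finset.card_filter_add_card_filter_not]
    simp [ZMod]
  have hc : c = 0 ∨ c = 1 := by revert c; decide
  rcases hc with hc | hc <;> subst hc
  · have h01 := hbij 0; rw [zero_add] at h01; linarith
  · have h01 := hbij 0; rw [zero_add] at h01; linarith

end Stmt19
namespace Stmt19

lemma count_M {r m : ℕ} (e : Fin m → F2) (he : e ≠ 0) (z : Fin r → F2) :
    (Finset.univ.filter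
      (fun M : Fin r → Fin m → F2 => ∀ j, ∑ k, M j k * e k = z j)).card * 2^r = (2^m)^r := by
  rw [show (Finset.univ.filter
        (fun M : Fin r → Fin m → F2 => ∀ j, ∑ k, M j k * e k = z j))
      = Fintype.piFinset (fun j => Finset.univ.filter
          (fun row : Fin m → F2 => ∑ k, row k * e k = z j)) from by
    ext M; simp [Fintype.mem_piFinset]]
  rw [Fintype.card_piFinset]
  rw [show (2:ℕ)^r = ∏ _j : Fin r, 2 from by simp]
  rw [← Finset.prod_mul_distrib]
  rw [show (2^m : ℕ)^r = ∏ _j : Fin r, 2^m from by simp]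
  exact Finset.prod_congr rfl fun j _ => row_count e he (z j)

/-- counting `ω` with `Lz ω v = w` for one fixed `v`. -/
lemma count_L_single {r m : ℕ} (v : Fin m → F2) (w : Fin r → F2) :
    (Finset.univ.filter (fun ω : Om r m => Lz ω v = w)).card = (2^m)^r := by
  have : ∀ M : Fin r → Fin m → F2,
      (Finset.univ.filter (fun b : Fin r → F2 => Lz (M, b) v = w)).card = 1 := by
    intro M
    rw [Finset.card_eq_one]
    refine ⟨fun j => w j - ∑ k, M j k * v k, ?_⟩
    ext b
    simp only [Finset.mem_filter, Finset.mem_univ, true_and, Finset.mem_singleton]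
    constructor
    · intro hb; funext j
      have := congrFun hb j
      simp only [Lz] at this
      linear_combination this
    · intro hb; subst hb; funext j; simp [Lz]
  rw [show (Finset.univ.filter (fun ω : Om r m => Lz ω v = w))
      = (Finset.univ : Finset (Fin r → Fin m → F2)).biUnion
          (fun M => (Finset.univ.filter (fun b : Fin r → F2 => Lz (M, b) v = w)).image
            (fun b => ((M, b) : Om r m))) from by
    ext ω
    obtain ⟨M0, b0⟩ := ω
    constructor
    · intro h
      have h' : Lz (M0, b0) v = w := (Finset.mem_filter.mp h).2
      exact Finset.mem_biUnion.mpr ⟨M0, Finset.mem_univ _,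
        Finset.mem_image.mpr ⟨b0, Finset.mem_filter.mpr ⟨Finset.mem_univ _, h'⟩, rfl⟩⟩
    · intro h
      obtain ⟨M, -, hM⟩ := Finset.mem_biUnion.mp h
      obtain ⟨b, hb, hb2⟩ := Finset.mem_image.mp hM
      obtain ⟨rfl, rfl⟩ : M = M0 ∧ b = b0 :=
        ⟨congrArg Prod.fst hb2, congrArg Prod.snd hb2⟩
      exact Finset.mem_filter.mpr ⟨Finset.mem_univ _, (Finset.mem_filter.mp hb).2⟩]
  rw [Finset.card_biUnion]
  · rw [show ((2:ℕ)^m)^r = ∑ _M : Fin r → Fin m → F2, 1 from by simp [ZMod, Fintype.card_fun]]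
    apply Finset.sum_congr rfl
    intro M _
    rw [Finset.card_image_of_injective _ (fun b b' hb => by simpa using congrArg Prod.snd hb)]
    exact this M
  · intro M _ M' _ hMM'
    simp only [Finset.disjoint_left]
    rintro ω hω hω'
    simp only [Finset.mem_image] at hω hω'
    obtain ⟨b, -, rfl⟩ := hω
    obtain ⟨b', -, h⟩ := hω'
    exact hMM' (congrArg Prod.fst h).symm

/-- counting `ω` with `Lz ω v = w`, `Lz ω v' = w'` for fixed `v ≠ v'`. -/
lemma count_L_pair {r m : ℕ} (v v' : Fin m → F2) (hvv : v ≠ v') (w w' : Fin r → F2) :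
    (Finset.univ.filter (fun ω : Om r m => Lz ω v = w ∧ Lz ω v' = w')).card * 2^r
      = (2^m)^r := by
  classical
  set e : Fin m → F2 := fun k => v' k - v k with he_def
  have he : e ≠ 0 := by
    intro h
    apply hvv
    funext k
    have := congrFun h k
    simp only [he_def, Pi.zero_apply] at this
    linear_combination -this
  set z : Fin r → F2 := fun j => w' j - w j with hz_def
  rw [← count_M e he z]
  congr 1
  apply Finset.card_bij (fun (ω : Om r m) _ => ω.1)
  · rintro ⟨M, b⟩ hab
    simp only [Finset.mem_filter, Finset.mem_univ, true_and] at hab ⊢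
    obtain ⟨h1, h2⟩ := hab
    intro j
    have e1 := congrFun h1 j
    have e2 := congrFun h2 j
    simp only [Lz] at e1 e2
    have : (∑ k, M j k * v' k) - (∑ k, M j k * v k) = w' j - w j := by
      linear_combination e2 - e1
    rw [← Finset.sum_sub_distrib] at this
    rw [show (∑ k, M j k * e k) = ∑ k, (M j k * v' k - M j k * v k) from
      Finset.sum_congr rfl fun k _ => by simp [he_def]; ring]
    rw [this]
  · rintro ⟨M, b⟩ hab ⟨M', b'⟩ hab' (h : M = M')
    subst h
    simp only [Finset.mem_filter, Finset.mem_univ, true_and] at hab hab'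
    obtain ⟨h1, -⟩ := hab
    obtain ⟨h1', -⟩ := hab'
    have : b = b' := by
      funext j
      have e1 := congrFun h1 j
      have e1' := congrFun h1' j
      simp only [Lz] at e1 e1'
      linear_combination e1 - e1'
    rw [this]
  · intro M hM
    simp only [Finset.mem_filter, Finset.mem_univ, true_and] at hM
    refine ⟨(M, fun j => w j - ∑ k, M j k * v k), ?_, rfl⟩
    simp only [Finset.mem_filter, Finset.mem_univ, true_and]
    constructor
    · funext j; simp [Lz]
    · funext j
      have hMj := hM j
      rw [show (∑ k, M j k * e k) = (∑ k, M j k * v' k) - (∑ k, M j k * v k) from by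
        rw [← Finset.sum_sub_distrib]
        exact Finset.sum_congr rfl fun k _ => by simp [he_def]; ring] at hMj
      simp only [Lz]
      simp only [hz_def] at hMj
      linear_combination hMj

end Stmt19
namespace Stmt19

section Variance

variable {r n m : ℕ} (P : Fin n → MvPolynomial (Fin r) F2)

/-- fiber count of the source map. -/
noncomputable def cntP (P : Fin n → MvPolynomial (Fin r) F2) (x : Fin n → Bool) : ℕ :=
  (Finset.univ.filter (fun w : Fin r → F2 => fzP P w = x)).card

/-- fiber count of the composed map. -/
noncomputable def Jf (P : Fin n → MvPolynomial (Fin r) F2) (ω : Om r m) (x : Fin n → Bool) : ℕ :=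
  (Finset.univ.filter (fun v : Fin m → F2 => fzP P (Lz ω v) = x)).card

lemma keySingle (x : Fin n → Bool) (v : Fin m → F2) :
    (Finset.univ.filter (fun ω : Om r m => fzP P (Lz ω v) = x)).card
      = cntP P x * (2^m)^r := by
  classical
  rw [Finset.card_eq_sum_card_fiberwise
    (f := fun ω : Om r m => Lz ω v)
    (t := Finset.univ.filter (fun w : Fin r → F2 => fzP P w = x))
    (fun ω hω => by
      simp only [Finset.mem_coe, Finset.mem_filter, Finset.mem_univ, true_and] at hω ⊢; exact hω)]
  rw [show cntP P x * (2^m)^r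
      = ∑ _w ∈ Finset.univ.filter (fun w : Fin r → F2 => fzP P w = x), (2^m)^r from by
    rw [Finset.sum_const, cntP]; ring]
  apply Finset.sum_congr rfl
  intro w hw
  simp only [Finset.mem_filter, Finset.mem_univ, true_and] at hw
  rw [Finset.filter_filter]
  rw [show (Finset.univ.filter (fun ω : Om r m => fzP P (Lz ω v) = x ∧ Lz ω v = w))
      = (Finset.univ.filter (fun ω : Om r m => Lz ω v = w)) from
    Finset.filter_congr fun ω _ => by
      constructor
      · exact fun h => h.2
      · exact fun h => ⟨by rw [h, hw], h⟩]
  exact count_L_single v w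

lemma keyPair (x : Fin n → Bool) (v v' : Fin m → F2) (hvv : v ≠ v') :
    (Finset.univ.filter
        (fun ω : Om r m => fzP P (Lz ω v) = x ∧ fzP P (Lz ω v') = x)).card * 2^r
      = cntP P x * cntP P x * (2^m)^r := by
  classical
  rw [Finset.card_eq_sum_card_fiberwise
    (f := fun ω : Om r m => (Lz ω v, Lz ω v'))
    (t := (Finset.univ.filter (fun w : Fin r → F2 => fzP P w = x)) ×ˢ
          (Finset.univ.filter (fun w : Fin r → F2 => fzP P w = x)))
    (fun ω hω => by
      simp only [Finset.mem_coe, Finset.mem_filter, Finset.mem_univ, true_and, Finset.mem_product] at hω ⊢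
      exact hω)]
  rw [Finset.sum_mul]
  rw [show cntP P x * cntP P x * (2^m)^r
      = ∑ _p ∈ (Finset.univ.filter (fun w : Fin r → F2 => fzP P w = x)) ×ˢ
          (Finset.univ.filter (fun w : Fin r → F2 => fzP P w = x)), (2^m)^r from by
    rw [Finset.sum_const, Finset.card_product, cntP]; ring]
  apply Finset.sum_congr rfl
  rintro ⟨w, w'⟩ hw
  simp only [Finset.mem_product, Finset.mem_filter, Finset.mem_univ, true_and] at hw
  rw [Finset.filter_filter]
  rw [show (Finset.univ.filter (fun ω : Om r m =>
        (fzP P (Lz ω v) = x ∧ fzP P (Lz ω v') = x) ∧ (Lz ω v, Lz ω v') = (w, w')))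
      = (Finset.univ.filter (fun ω : Om r m => Lz ω v = w ∧ Lz ω v' = w')) from
    Finset.filter_congr fun ω _ => by
      constructor
      · intro h
        exact ⟨congrArg Prod.fst h.2, congrArg Prod.snd h.2⟩
      · rintro ⟨h1, h2⟩
        refine ⟨⟨?_, ?_⟩, ?_⟩
        · rw [h1, hw.1]
        · rw [h2, hw.2]
        · rw [h1, h2]]
  exact count_L_pair v v' hvv w w'

lemma sumJ (x : Fin n → Bool) :
    ∑ ω : Om r m, Jf P ω x = 2^m * (cntP P x * (2^m)^r) := by
  classical
  have : ∀ ω : Om r m, Jf P ω x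
      = ∑ v : Fin m → F2, (if fzP P (Lz ω v) = x then 1 else 0) := by
    intro ω; rw [Jf, Finset.card_filter]
  rw [Finset.sum_congr rfl fun ω _ => this ω, Finset.sum_comm]
  rw [show (2:ℕ)^m * (cntP P x * (2^m)^r) = ∑ _v : Fin m → F2, cntP P x * (2^m)^r from by
    simp [ZMod, Fintype.card_fun, mul_comm]]
  apply Finset.sum_congr rfl
  intro v _
  rw [← Finset.card_filter]
  exact keySingle P x v

lemma sumJsq (x : Fin n → Bool) :
    (∑ ω : Om r m, (Jf P ω x)^2) * 2^r
      ≤ 2^m * (cntP P x * (2^m)^r) * 2^r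
        + 2^m * (2^m * (cntP P x * cntP P x * (2^m)^r)) := by
  classical
  have hJ : ∀ ω : Om r m, (Jf P ω x)^2
      = ∑ v : Fin m → F2, ∑ v' : Fin m → F2,
          (if fzP P (Lz ω v) = x ∧ fzP P (Lz ω v') = x then 1 else 0) := by
    intro ω
    rw [Jf, Finset.card_filter, sq, Finset.sum_mul_sum]
    apply Finset.sum_congr rfl; intro v _
    apply Finset.sum_congr rfl; intro v' _
    split_ifs with h1 h2 h3 h4 h5 <;> simp_all
  rw [Finset.sum_congr rfl fun ω _ => hJ ω, Finset.sum_comm]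
  have swap2 : ∀ v : Fin m → F2,
      (∑ ω : Om r m, ∑ v' : Fin m → F2,
        (if fzP P (Lz ω v) = x ∧ fzP P (Lz ω v') = x then 1 else 0))
      = ∑ v' : Fin m → F2, (Finset.univ.filter
          (fun ω : Om r m => fzP P (Lz ω v) = x ∧ fzP P (Lz ω v') = x)).card := by
    intro v
    rw [Finset.sum_comm]
    exact Finset.sum_congr rfl fun v' _ => (Finset.card_filter _ _).symm
  rw [Finset.sum_congr rfl fun v _ => swap2 v]
  -- now bound each inner sum
  have inner : ∀ v : Fin m → F2,
      (∑ v' : Fin m → F2, (Finset.univ.filter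
          (fun ω : Om r m => fzP P (Lz ω v) = x ∧ fzP P (Lz ω v') = x)).card) * 2^r
      ≤ cntP P x * (2^m)^r * 2^r + 2^m * (cntP P x * cntP P x * (2^m)^r) := by
    intro v
    rw [Finset.sum_eq_add_sum_sdiff_singleton_of_mem (Finset.mem_univ v), Nat.add_mul]
    apply Nat.add_le_add
    · rw [show (Finset.univ.filter
          (fun ω : Om r m => fzP P (Lz ω v) = x ∧ fzP P (Lz ω v) = x))
          = (Finset.univ.filter (fun ω : Om r m => fzP P (Lz ω v) = x)) from
        Finset.filter_congr fun ω _ => by tauto]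
      rw [keySingle P x v]
    · rw [Finset.sum_mul]
      calc ∑ v' ∈ Finset.univ \ {v}, (Finset.univ.filter
            (fun ω : Om r m => fzP P (Lz ω v) = x ∧ fzP P (Lz ω v') = x)).card * 2^r
          = ∑ v' ∈ Finset.univ \ {v}, cntP P x * cntP P x * (2^m)^r := by
            apply Finset.sum_congr rfl
            intro v' hv'
            simp only [Finset.mem_sdiff, Finset.mem_univ, true_and,
              Finset.mem_singleton] at hv'
            exact keyPair P x v v' (fun h => hv' h.symm)
        _ ≤ 2^m * (cntP P x * cntP P x * (2^m)^r) := by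
            rw [Finset.sum_const, smul_eq_mul]
            apply Nat.mul_le_mul_right
            calc (Finset.univ \ {v}).card ≤ (Finset.univ : Finset (Fin m → F2)).card :=
                  Finset.card_le_card (Finset.sdiff_subset)
              _ = 2^m := by simp [ZMod, Fintype.card_fun]
  calc (∑ v : Fin m → F2, ∑ v' : Fin m → F2, (Finset.univ.filter
          (fun ω : Om r m => fzP P (Lz ω v) = x ∧ fzP P (Lz ω v') = x)).card) * 2^r
      = ∑ v : Fin m → F2, ((∑ v' : Fin m → F2, (Finset.univ.filter
          (fun ω : Om r m => fzP P (Lz ω v) = x ∧ fzP P (Lz ω v') = x)).card) * 2^r) := by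
        rw [Finset.sum_mul]
    _ ≤ ∑ _v : Fin m → F2,
          (cntP P x * (2^m)^r * 2^r + 2^m * (cntP P x * cntP P x * (2^m)^r)) :=
        Finset.sum_le_sum fun v _ => inner v
    _ = 2^m * (cntP P x * (2^m)^r) * 2^r + 2^m * (2^m * (cntP P x * cntP P x * (2^m)^r)) := by
        rw [Finset.sum_const, smul_eq_mul]
        rw [show (Finset.univ : Finset (Fin m → F2)).card = 2^m by simp [ZMod, Fintype.card_fun]]
        ring

end Variance

end Stmt19
namespace Stmt19

section Variance2

variable {r n m : ℕ} (P : Fin n → MvPolynomial (Fin r) F2)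

lemma perX (x : Fin n → Bool) :
    ∑ ω : Om r m, ((Jf P ω x : ℝ) * 2^r - (cntP P x : ℝ) * 2^m)^2
      ≤ (cntP P x : ℝ) * ((2:ℝ)^m)^r * ((2:ℝ)^r)^2 * 2^m := by
  classical
  set A : ℝ := (2:ℝ)^r with hA
  set B : ℝ := (2:ℝ)^m with hB
  set C : ℝ := ((2:ℝ)^m)^r with hC
  set c : ℝ := (cntP P x : ℝ) with hc
  have hs1 : ∑ ω : Om r m, (Jf P ω x : ℝ) = B * (c * C) := by
    rw [← Nat.cast_sum, sumJ P x]
    push_cast [hB, hc, hC]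
    ring
  have hs2 : (∑ ω : Om r m, (Jf P ω x : ℝ)^2) * A ≤ B * (c * C) * A + B * (B * (c * c * C)) := by
    have := sumJsq P (m := m) x
    have hcast : ((∑ ω : Om r m, (Jf P ω x)^2) * 2^r : ℕ)
        ≤ ((2^m * (cntP P x * (2^m)^r) * 2^r + 2^m * (2^m * (cntP P x * cntP P x * (2^m)^r))) : ℕ) := this
    have := (Nat.cast_le (α := ℝ)).mpr hcast
    push_cast at this
    push_cast [hA, hB, hc, hC]
    convert this using 2 <;> ring
  have hcard : (Fintype.card (Om r m) : ℝ) = C * A := by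
    rw [card_Om]; push_cast [hA, hB, hC]; ring
  have hexp : ∀ ω : Om r m, ((Jf P ω x : ℝ) * A - c * B)^2
      = (Jf P ω x : ℝ)^2 * A^2 - 2*c*A*B*(Jf P ω x : ℝ) + c^2*B^2 := by
    intro ω; ring
  rw [Finset.sum_congr rfl fun ω _ => hexp ω]
  rw [Finset.sum_add_distrib, Finset.sum_sub_distrib, ← Finset.sum_mul, ← Finset.mul_sum,
    Finset.sum_const, Finset.card_univ, nsmul_eq_mul, hcard, hs1]
  have hA0 : (0:ℝ) < A := by rw [hA]; positivity
  nlinarith [hs2, sq_nonneg A, sq_nonneg B]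

lemma exists_close :
    ∃ ω : Om r m,
      ∑ x : Fin n → Bool,
        ((Jf P ω x : ℝ) * 2^r - (cntP P x : ℝ) * 2^m)^2 ≤ ((2:ℝ)^r)^2 * 2^m := by
  classical
  have htot : ∑ ω : Om r m, ∑ x : Fin n → Bool,
      ((Jf P ω x : ℝ) * 2^r - (cntP P x : ℝ) * 2^m)^2
      ≤ (Fintype.card (Om r m) : ℝ) * (((2:ℝ)^r)^2 * 2^m) := by
    rw [Finset.sum_comm]
    calc ∑ x : Fin n → Bool, ∑ ω : Om r m,
          ((Jf P ω x : ℝ) * 2^r - (cntP P x : ℝ) * 2^m)^2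
        ≤ ∑ x : Fin n → Bool, (cntP P x : ℝ) * ((2:ℝ)^m)^r * ((2:ℝ)^r)^2 * 2^m :=
          Finset.sum_le_sum fun x _ => perX P x
      _ = (∑ x : Fin n → Bool, (cntP P x : ℝ)) * (((2:ℝ)^m)^r * ((2:ℝ)^r)^2 * 2^m) := by
          rw [Finset.sum_mul]
          exact Finset.sum_congr rfl fun x _ => by ring
      _ = (Fintype.card (Om r m) : ℝ) * (((2:ℝ)^r)^2 * 2^m) := by
          rw [show ∑ x : Fin n → Bool, (cntP P x : ℝ) = (2:ℝ)^r from by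
            rw [← Nat.cast_sum]
            rw [show ∑ x : Fin n → Bool, cntP P x = 2^r from by
              have := card_fiber_sum (fzP P)
              rw [card_f2vec] at this
              exact this]
            push_cast; ring]
          rw [card_Om]
          push_cast
          ring
  by_contra hcon
  push_neg at hcon
  have hlt : (Fintype.card (Om r m) : ℝ) * (((2:ℝ)^r)^2 * 2^m)
      < ∑ ω : Om r m, ∑ x : Fin n → Bool,
        ((Jf P ω x : ℝ) * 2^r - (cntP P x : ℝ) * 2^m)^2 := by
    calc (Fintype.card (Om r m) : ℝ) * (((2:ℝ)^r)^2 * 2^m)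
        = ∑ _ω : Om r m, (((2:ℝ)^r)^2 * 2^m) := by
          rw [Finset.sum_const, Finset.card_univ, nsmul_eq_mul]
      _ < _ := by
          apply Finset.sum_lt_sum_of_nonempty Finset.univ_nonempty
          intro ω _
          exact hcon ω
  linarith

end Variance2

end Stmt19
namespace Stmt19

open MvPolynomial

lemma eval_bind1 {σ τ : Type*} {R : Type*} [CommSemiring R] (f : σ → MvPolynomial τ R)
    (x : τ → R) (p : MvPolynomial σ R) :
    eval x (bind₁ f p) = eval (fun j => eval x (f j)) p :=
  eval₂Hom_bind₁ (RingHom.id R) x f p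

lemma totalDegree_bind1_le {σ τ : Type*} {R : Type*} [CommSemiring R]
    (f : σ → MvPolynomial τ R) (hf : ∀ j, (f j).totalDegree ≤ 1) (p : MvPolynomial σ R) :
    (bind₁ f p).totalDegree ≤ p.totalDegree := by
  rw [show (bind₁ f p) = eval₂ (algebraMap R (MvPolynomial τ R)) f p from rfl]
  rw [eval₂_eq]
  apply (totalDegree_finset_sum _ _).trans
  apply Finset.sup_le
  intro μ hμ
  calc (algebraMap R (MvPolynomial τ R) (coeff μ p) * ∏ i ∈ μ.support, f i ^ μ i).totalDegree
      ≤ (algebraMap R (MvPolynomial τ R) (coeff μ p)).totalDegree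
        + (∏ i ∈ μ.support, f i ^ μ i).totalDegree := totalDegree_mul _ _
    _ = (∏ i ∈ μ.support, f i ^ μ i).totalDegree := by
        rw [algebraMap_eq, totalDegree_C, zero_add]
    _ ≤ ∑ i ∈ μ.support, (f i ^ μ i).totalDegree := totalDegree_finset_prod _ _
    _ ≤ ∑ i ∈ μ.support, μ i := by
        apply Finset.sum_le_sum
        intro i _
        calc (f i ^ μ i).totalDegree ≤ μ i * (f i).totalDegree := totalDegree_pow _ _
          _ ≤ μ i * 1 := Nat.mul_le_mul_left _ (hf i)
          _ = μ i := Nat.mul_one _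
    _ ≤ p.totalDegree := le_totalDegree hμ

lemma lemmaA {r n d : ℕ} (m : ℕ) (P : Fin n → MvPolynomial (Fin r) F2)
    (hP : ∀ i, (P i).totalDegree ≤ d) :
    ∃ Q : Fin n → MvPolynomial (Fin m) F2, (∀ i, (Q i).totalDegree ≤ d) ∧
      (∑ x : Fin n → Bool, |distOf (fzP Q) x - distOf (fzP P) x|)^2
        ≤ (2:ℝ)^n / 2^m := by
  classical
  obtain ⟨ω, hω⟩ := exists_close (m := m) P
  set ℓ : Fin r → MvPolynomial (Fin m) F2 :=
    fun j => (∑ k, MvPolynomial.C (ω.1 j k) * MvPolynomial.X k) + MvPolynomial.C (ω.2 j)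
    with hℓ
  have hℓdeg : ∀ j, (ℓ j).totalDegree ≤ 1 := by
    intro j
    apply (totalDegree_add _ _).trans
    apply max_le
    · apply (totalDegree_finset_sum _ _).trans
      apply Finset.sup_le
      intro k _
      apply (totalDegree_mul _ _).trans
      rw [totalDegree_C]
      rw [zero_add]
      exact le_of_eq (totalDegree_X _)
    · rw [totalDegree_C]; exact Nat.zero_le _
  refine ⟨fun i => bind₁ ℓ (P i), fun i => (totalDegree_bind1_le ℓ hℓdeg (P i)).trans (hP i), ?_⟩
  have hfz : fzP (fun i => bind₁ ℓ (P i)) = fun v => fzP P (Lz ω v) := by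
    funext v i
    unfold fzP
    congr 1
    rw [eval_bind1]
    rw [show (fun j => eval v (ℓ j)) = Lz ω v from funext fun j => by simp [hℓ, Lz]]
  rw [hfz]
  have hdist1 : ∀ x, distOf (fun v => fzP P (Lz ω v)) x = (Jf P ω x : ℝ) / 2^m := by
    intro x
    unfold distOf Jf
    rw [card_f2vec]
    push_cast
    rfl
  have hdist2 : ∀ x, distOf (fzP P) x = (cntP P x : ℝ) / 2^r := by
    intro x
    unfold distOf cntP
    rw [card_f2vec]
    push_cast
    rfl
  have hAB : ∀ x, |distOf (fun v => fzP P (Lz ω v)) x - distOf (fzP P) x|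
      = |(Jf P ω x : ℝ) * 2^r - (cntP P x : ℝ) * 2^m| / ((2:ℝ)^r * 2^m) := by
    intro x
    rw [hdist1, hdist2, div_sub_div _ _ (by positivity : ((2:ℝ)^m) ≠ 0)
      (by positivity : ((2:ℝ)^r) ≠ 0), abs_div,
      abs_of_pos (by positivity : (0:ℝ) < 2^m * 2^r)]
    rw [show ((Jf P ω x:ℝ) * 2^r - 2^m * (cntP P x:ℝ))
        = ((Jf P ω x:ℝ) * 2^r - (cntP P x:ℝ) * 2^m) from by ring]
    rw [mul_comm ((2:ℝ)^m) ((2:ℝ)^r)]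
  rw [Finset.sum_congr rfl fun x _ => hAB x]
  rw [← Finset.sum_div]
  rw [div_pow]
  have hCS : (∑ x : Fin n → Bool, |(Jf P ω x : ℝ) * 2^r - (cntP P x : ℝ) * 2^m|)^2
      ≤ (2:ℝ)^n * (((2:ℝ)^r)^2 * 2^m) := by
    calc (∑ x : Fin n → Bool, |(Jf P ω x : ℝ) * 2^r - (cntP P x : ℝ) * 2^m|)^2
        ≤ ((Finset.univ : Finset (Fin n → Bool)).card : ℝ)
          * ∑ x : Fin n → Bool, |(Jf P ω x : ℝ) * 2^r - (cntP P x : ℝ) * 2^m|^2 :=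
          sq_sum_le_card_mul_sum_sq
      _ ≤ (2:ℝ)^n * (((2:ℝ)^r)^2 * 2^m) := by
          apply mul_le_mul
          · rw [Finset.card_univ]
            simp
          · calc ∑ x : Fin n → Bool, |(Jf P ω x : ℝ) * 2^r - (cntP P x : ℝ) * 2^m|^2
                = ∑ x : Fin n → Bool, ((Jf P ω x : ℝ) * 2^r - (cntP P x : ℝ) * 2^m)^2 :=
                  Finset.sum_congr rfl fun x _ => sq_abs _
              _ ≤ ((2:ℝ)^r)^2 * 2^m := hω
          · positivity
          · positivity
  calc (∑ x : Fin n → Bool, |(Jf P ω x : ℝ) * 2^r - (cntP P x : ℝ) * 2^m|)^2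
        / ((2:ℝ)^r * 2^m)^2
      ≤ ((2:ℝ)^n * (((2:ℝ)^r)^2 * 2^m)) / ((2:ℝ)^r * 2^m)^2 := by
        apply div_le_div_of_nonneg_right hCS (by positivity)
    _ = (2:ℝ)^n / 2^m := by
        field_simp
end Stmt19
namespace Stmt19

open MvPolynomial

section Multilin

variable {m : ℕ}

/-- squarefree exponent vector of a finset. -/
noncomputable def sqF (T : Finset (Fin m)) : Fin m →₀ ℕ := ∑ k ∈ T, Finsupp.single k 1

lemma sqF_apply (T : Finset (Fin m)) (k : Fin m) : sqF T k = if k ∈ T then 1 else 0 := by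
  classical
  unfold sqF
  rw [Finset.sum_apply']
  rw [show (∑ j ∈ T, Finsupp.single j 1 k) = ∑ j ∈ T, (if j = k then 1 else 0) from
    Finset.sum_congr rfl fun j _ => by rw [Finsupp.single_apply]]
  split_ifs with h
  · rw [Finset.sum_eq_single_of_mem k h (fun j _ hj => by simp [hj])]
    simp
  · apply Finset.sum_eq_zero
    intro j hj
    simp only [ite_eq_right_iff]
    intro hjk; exact absurd (hjk ▸ hj) h

lemma sqF_support (T : Finset (Fin m)) : (sqF T).support = T := by
  ext k
  simp only [Finsupp.mem_support_iff, sqF_apply]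
  split_ifs with h <;> simp [h]

lemma sqF_sum (T : Finset (Fin m)) : (sqF T).sum (fun _ e => e) = T.card := by
  rw [Finsupp.sum, sqF_support]
  rw [Finset.card_eq_sum_ones]
  exact Finset.sum_congr rfl fun k hk => by rw [sqF_apply, if_pos hk]

lemma sqF_inj (T T' : Finset (Fin m)) (h : sqF T = sqF T') : T = T' := by
  rw [← sqF_support T, ← sqF_support T', h]

/-- multilinear reduction. -/
noncomputable def ml (p : MvPolynomial (Fin m) F2) : MvPolynomial (Fin m) F2 :=
  ∑ μ ∈ p.support, monomial (sqF μ.support) (coeff μ p)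

lemma zmod2_pow (x : F2) (e : ℕ) (he : 1 ≤ e) : x^e = x := by
  have hx : x * x = x := by revert x; decide
  induction e with
  | zero => omega
  | succ k ih =>
    rcases Nat.eq_or_lt_of_le he with h'|h'
    · simp [← h']
    · rw [pow_succ, ih (by omega), hx]

lemma ml_eval (x : Fin m → F2) (p : MvPolynomial (Fin m) F2) :
    eval x (ml p) = eval x p := by
  classical
  conv_rhs => rw [p.as_sum]
  unfold ml
  rw [map_sum, map_sum]
  apply Finset.sum_congr rfl
  intro μ hμ
  rw [eval_monomial, eval_monomial]
  congr 1
  rw [show (sqF μ.support).prod (fun k e => x k ^ e)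
      = ∏ k ∈ μ.support, x k ^ (sqF μ.support k) from by rw [Finsupp.prod, sqF_support]]
  rw [show μ.prod (fun k e => x k ^ e) = ∏ k ∈ μ.support, x k ^ μ k from rfl]
  apply Finset.prod_congr rfl
  intro k hk
  rw [sqF_apply, if_pos hk, pow_one,
    zmod2_pow _ _ (Nat.one_le_iff_ne_zero.mpr (Finsupp.mem_support_iff.mp hk))]

lemma ml_deg (p : MvPolynomial (Fin m) F2) : (ml p).totalDegree ≤ p.totalDegree := by
  unfold ml
  apply (totalDegree_finset_sum _ _).trans
  apply Finset.sup_le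
  intro μ hμ
  apply (totalDegree_monomial_le _ _).trans
  rw [show ((sqF μ.support).sum fun _ => id) = (sqF μ.support).sum (fun _ e => e) from rfl,
    sqF_sum]
  calc μ.support.card ≤ μ.sum (fun _ e => e) := by
        rw [Finsupp.sum, Finset.card_eq_sum_ones]
        apply Finset.sum_le_sum
        intro i hi
        exact Nat.one_le_iff_ne_zero.mpr (Finsupp.mem_support_iff.mp hi)
    _ ≤ p.totalDegree := le_totalDegree hμ

lemma ml_support (p : MvPolynomial (Fin m) F2) (ν : Fin m →₀ ℕ) (hν : ν ∈ (ml p).support) :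
    ∃ T : Finset (Fin m), T.card ≤ p.totalDegree ∧ ν = sqF T := by
  classical
  unfold ml at hν
  obtain ⟨μ, hμ, hν2⟩ := Finset.mem_biUnion.mp (MvPolynomial.support_sum hν)
  have : ν = sqF μ.support := by
    by_cases hc : coeff μ p = 0
    · rw [hc] at hν2; simp [MvPolynomial.support_monomial] at hν2
    · rw [MvPolynomial.support_monomial, if_neg hc] at hν2
      exact Finset.mem_singleton.mp hν2
  refine ⟨μ.support, ?_, this⟩
  calc μ.support.card ≤ μ.sum (fun _ e => e) := by
        rw [Finsupp.sum, Finset.card_eq_sum_ones]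
        apply Finset.sum_le_sum
        intro i hi
        exact Nat.one_le_iff_ne_zero.mpr (Finsupp.mem_support_iff.mp hi)
    _ ≤ p.totalDegree := le_totalDegree hμ

abbrev MonIdx (m d : ℕ) := {T : Finset (Fin m) // T.card ≤ d}

noncomputable def Phipoly (d : ℕ) (cc : MonIdx m d → F2) : MvPolynomial (Fin m) F2 :=
  ∑ T : MonIdx m d, monomial (sqF T.1) (cc T)

lemma rep (d : ℕ) (q : MvPolynomial (Fin m) F2) (hq : q.totalDegree ≤ d) :
    Phipoly d (fun T => coeff (sqF T.1) (ml q)) = ml q := by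
  classical
  have himg : (ml q).support ⊆ Finset.image (fun T : MonIdx m d => sqF T.1) Finset.univ := by
    intro ν hν
    obtain ⟨T, hT, rfl⟩ := ml_support q ν hν
    exact Finset.mem_image.mpr ⟨⟨T, hT.trans hq⟩, Finset.mem_univ _, rfl⟩
  conv_rhs => rw [(ml q).as_sum]
  rw [Finset.sum_subset himg (fun ν _ hν => by
    rw [MvPolynomial.notMem_support_iff.mp hν, monomial_zero])]
  unfold Phipoly
  rw [Finset.sum_image (fun T _ T' _ h => Subtype.ext (sqF_inj _ _ h))]

lemma fz_ml {n : ℕ} (Q : Fin n → MvPolynomial (Fin m) F2) :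
    fzP (fun i => ml (Q i)) = fzP Q := by
  funext w i
  unfold fzP
  rw [ml_eval]

end Multilin

end Stmt19
namespace Stmt19

section GoodSet

variable {n : ℕ}

abbrev Vn (n : ℕ) := Fin n → Bool

lemma count_supersets (s t : ℕ) (T : Finset (Vn n)) (hT : T.card = t) (hts : t ≤ s) :
    ((Finset.powersetCard s (Finset.univ : Finset (Vn n))).filter (fun S => T ⊆ S)).card
      = Nat.choose (2^n - t) (s - t) := by
  classical
  have huniv : (Finset.univ : Finset (Vn n)).card = 2^n := by simp
  rw [← huniv]
  rw [show (Finset.univ : Finset (Vn n)).card - t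
      = ((Finset.univ : Finset (Vn n)) \ T).card from by
    rw [Finset.card_sdiff_of_subset (Finset.subset_univ T), hT]]
  rw [← Finset.card_powersetCard]
  apply Finset.card_bij' (fun S _ => S \ T) (fun S' _ => S' ∪ T)
  · intro S hS
    simp only [Finset.mem_filter, Finset.mem_powersetCard] at hS
    obtain ⟨⟨-, hcard⟩, hTS⟩ := hS
    rw [Finset.mem_powersetCard]
    constructor
    · exact fun x hx => by
        rw [Finset.mem_sdiff] at hx ⊢
        exact ⟨Finset.mem_univ _, hx.2⟩
    · rw [Finset.card_sdiff_of_subset hTS, hcard, hT]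
  · intro S' hS'
    rw [Finset.mem_powersetCard] at hS'
    obtain ⟨hsub, hcard⟩ := hS'
    have hdisj : Disjoint S' T := by
      rw [Finset.disjoint_left]
      intro x hx
      exact (Finset.mem_sdiff.mp (hsub hx)).2
    simp only [Finset.mem_filter, Finset.mem_powersetCard]
    refine ⟨⟨Finset.subset_univ _, ?_⟩, Finset.subset_union_right⟩
    rw [Finset.card_union_of_disjoint hdisj, hcard, hT]
    omega
  · intro S hS
    simp only [Finset.mem_filter] at hS
    exact Finset.sdiff_union_of_subset hS.2
  · intro S' hS'
    rw [Finset.mem_powersetCard] at hS'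
    apply Finset.union_sdiff_cancel_right
    rw [Finset.disjoint_left]
    intro x hx
    exact (Finset.mem_sdiff.mp (hS'.1 hx)).2

lemma exists_good (C : Type*) [Fintype C] (Wfun : C → Finset (Vn n)) (Wmax s t : ℕ)
    (hts : t ≤ s) (hs : s ≤ 2^n) (hW : ∀ c, (Wfun c).card ≤ Wmax)
    (hNum : Fintype.card C * (Nat.choose Wmax t * Nat.choose (2^n - t) (s - t))
       < Nat.choose (2^n) s) :
    ∃ S : Finset (Vn n), S.card = s ∧ ∀ c, ((S ∩ Wfun c).card) < t := by
  classical
  set P := Finset.powersetCard s (Finset.univ : Finset (Vn n)) with hP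
  have hPcard : P.card = Nat.choose (2^n) s := by
    rw [hP, Finset.card_powersetCard]; simp
  set Bad := P.filter (fun S => ∃ c, t ≤ (S ∩ Wfun c).card) with hBad
  have hbadc : ∀ c, (P.filter (fun S => t ≤ (S ∩ Wfun c).card)).card
      ≤ Nat.choose Wmax t * Nat.choose (2^n - t) (s - t) := by
    intro c
    have hsub : P.filter (fun S => t ≤ (S ∩ Wfun c).card)
        ⊆ (Finset.powersetCard t (Wfun c)).biUnion
            (fun T => P.filter (fun S => T ⊆ S)) := by
      intro S hS
      simp only [Finset.mem_filter] at hS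
      obtain ⟨hSP, hcard⟩ := hS
      obtain ⟨T, hTsub, hTcard⟩ := Finset.exists_subset_card_eq hcard
      apply Finset.mem_biUnion.mpr
      refine ⟨T, ?_, ?_⟩
      · rw [Finset.mem_powersetCard]
        exact ⟨hTsub.trans Finset.inter_subset_right, hTcard⟩
      · simp only [Finset.mem_filter]
        exact ⟨hSP, hTsub.trans Finset.inter_subset_left⟩
    calc (P.filter (fun S => t ≤ (S ∩ Wfun c).card)).card
        ≤ ∑ T ∈ Finset.powersetCard t (Wfun c), (P.filter (fun S => T ⊆ S)).card :=
          (Finset.card_le_card hsub).trans Finset.card_biUnion_le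
      _ = ∑ _T ∈ Finset.powersetCard t (Wfun c), Nat.choose (2^n - t) (s - t) := by
          apply Finset.sum_congr rfl
          intro T hT
          rw [Finset.mem_powersetCard] at hT
          exact count_supersets s t T hT.2 hts
      _ = (Wfun c).card.choose t * Nat.choose (2^n - t) (s - t) := by
          rw [Finset.sum_const, Finset.card_powersetCard, smul_eq_mul]
      _ ≤ Nat.choose Wmax t * Nat.choose (2^n - t) (s - t) :=
          Nat.mul_le_mul_right _ (Nat.choose_le_choose t (hW c))
  have hBadcard : Bad.card < P.card := by
    have h1 : Bad ⊆ (Finset.univ : Finset C).biUnion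
        (fun c => P.filter (fun S => t ≤ (S ∩ Wfun c).card)) := by
      intro S hS
      simp only [hBad, Finset.mem_filter] at hS
      obtain ⟨hSP, c, hc⟩ := hS
      exact Finset.mem_biUnion.mpr ⟨c, Finset.mem_univ _,
        Finset.mem_filter.mpr ⟨hSP, hc⟩⟩
    calc Bad.card ≤ ∑ c : C, (P.filter (fun S => t ≤ (S ∩ Wfun c).card)).card :=
          (Finset.card_le_card h1).trans Finset.card_biUnion_le
      _ ≤ ∑ _c : C, Nat.choose Wmax t * Nat.choose (2^n - t) (s - t) :=
          Finset.sum_le_sum fun c _ => hbadc c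
      _ = Fintype.card C * (Nat.choose Wmax t * Nat.choose (2^n - t) (s - t)) := by
          rw [Finset.sum_const, Finset.card_univ, smul_eq_mul]
      _ < Nat.choose (2^n) s := hNum
      _ = P.card := hPcard.symm
  have hne : (P \ Bad).Nonempty := by
    rw [← Finset.card_pos, Finset.card_sdiff_of_subset (show Bad ⊆ P from Finset.filter_subset _ _)]
    omega
  obtain ⟨S, hS⟩ := hne
  rw [Finset.mem_sdiff] at hS
  obtain ⟨hSP, hSBad⟩ := hS
  refine ⟨S, ?_, ?_⟩
  · exact (Finset.mem_powersetCard.mp hSP).2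
  · intro c
    by_contra hcon
    push_neg at hcon
    exact hSBad (Finset.mem_filter.mpr ⟨hSP, ⟨c, hcon⟩⟩)

end GoodSet

end Stmt19
namespace Stmt19

lemma fac_lower : ∀ k : ℕ, ((k:ℝ)/3)^k ≤ (Nat.factorial k : ℝ) := by
  intro k
  induction k with
  | zero => simp
  | succ k ih =>
    rcases Nat.eq_zero_or_pos k with hk | hk
    · subst hk; norm_num [Nat.factorial]
    · have hk0 : (0:ℝ) < (k:ℝ) := by exact_mod_cast hk
      have key : (((k:ℝ)+1)/3)^k ≤ 3 * ((k:ℝ)/3)^k := by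
        have h1 : (((k:ℝ)+1)/3)^k = ((1 + 1/(k:ℝ))^k) * ((k:ℝ)/3)^k := by
          rw [← mul_pow]; congr 1; field_simp
        rw [h1]
        apply mul_le_mul_of_nonneg_right _ (by positivity)
        have h2 : (1 + 1/(k:ℝ)) ≤ Real.exp (1/(k:ℝ)) := by
          have := Real.add_one_le_exp (1/(k:ℝ)); linarith
        calc (1 + 1/(k:ℝ))^k ≤ (Real.exp (1/(k:ℝ)))^k :=
              pow_le_pow_left₀ (by positivity) h2 k
          _ = Real.exp ((k:ℝ) * (1/(k:ℝ))) := by rw [← Real.exp_nat_mul]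
          _ = Real.exp 1 := by rw [mul_one_div, div_self (ne_of_gt hk0)]
          _ ≤ 3 := by have := Real.exp_one_lt_d9; linarith
      have hcast : (((k+1:ℕ)):ℝ) = (k:ℝ) + 1 := by push_cast; ring
      rw [hcast]
      calc (((k:ℝ)+1)/3)^(k+1) = (((k:ℝ)+1)/3)^k * (((k:ℝ)+1)/3) := pow_succ _ _
        _ ≤ (3*((k:ℝ)/3)^k) * (((k:ℝ)+1)/3) := by
            apply mul_le_mul_of_nonneg_right key (by positivity)
        _ = ((k:ℝ)+1) * ((k:ℝ)/3)^k := by ring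
        _ ≤ ((k:ℝ)+1) * (Nat.factorial k : ℝ) := by
            apply mul_le_mul_of_nonneg_left ih (by positivity)
        _ = (Nat.factorial (k+1) : ℝ) := by rw [Nat.factorial_succ]; push_cast; ring

lemma choose_upper (w t : ℕ) (ht : 1 ≤ t) :
    (Nat.choose w t : ℝ) ≤ ((3*(w:ℝ))/t)^t := by
  have ht0 : (0:ℝ) < (t:ℝ) := by exact_mod_cast ht
  have h1 : (Nat.factorial t : ℝ) * (Nat.choose w t : ℝ) ≤ (w:ℝ)^t := by
    have hd := Nat.descFactorial_le_pow w t
    rw [Nat.descFactorial_eq_factorial_mul_choose] at hd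
    exact_mod_cast hd
  have hfac : ((t:ℝ)/3)^t ≤ (Nat.factorial t : ℝ) := fac_lower t
  have hft : (0:ℝ) < ((t:ℝ)/3)^t := by positivity
  have hfac0 : (0:ℝ) < (Nat.factorial t : ℝ) := by
    exact_mod_cast Nat.factorial_pos t
  calc (Nat.choose w t:ℝ) ≤ (w:ℝ)^t / (Nat.factorial t : ℝ) := by
        rw [le_div_iff₀ hfac0]; linarith [h1]
    _ ≤ (w:ℝ)^t / ((t:ℝ)/3)^t := by
        apply div_le_div_of_nonneg_left (by positivity) hft hfac
    _ = ((3*(w:ℝ))/t)^t := by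
        rw [← div_pow]
        congr 1
        field_simp

lemma chooseRatio (N s : ℕ) (hs : s ≤ N) : ∀ t, t ≤ s →
    (Nat.choose (N-t) (s-t):ℝ) * (N:ℝ)^t ≤ (Nat.choose N s : ℝ) * (s:ℝ)^t := by
  intro t
  induction t with
  | zero => simp
  | succ t ih =>
    intro ht1
    have ht : t ≤ s := by omega
    have hih := ih ht
    have htN : t < N := by omega
    have hts : t < s := by omega
    have hid : (N - t) * Nat.choose (N-t-1) (s-t-1) = Nat.choose (N-t) (s-t) * (s-t) := by
      have h := Nat.add_one_mul_choose_eq (N-t-1) (s-t-1)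
      rw [show N-t-1+1 = N - t by omega, show s-t-1+1 = s - t by omega] at h
      exact h
    have hNt0 : (0:ℝ) < ((N - t : ℕ):ℝ) := by
      have : 0 < N - t := by omega
      exact_mod_cast this
    apply le_of_mul_le_mul_left _ hNt0
    have e1 : ((N - t:ℕ):ℝ) * ((Nat.choose (N-(t+1)) (s-(t+1)):ℝ) * (N:ℝ)^(t+1))
        = ((Nat.choose (N-t) (s-t) * (s-t) : ℕ):ℝ) * ((N:ℝ)^t * (N:ℝ)) := by
      rw [show N-(t+1) = N-t-1 by omega, show s-(t+1) = s-t-1 by omega]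
      rw [← hid]
      push_cast
      ring
    rw [e1]
    have step1 : ((Nat.choose (N-t) (s-t) * (s-t) : ℕ):ℝ) * ((N:ℝ)^t * (N:ℝ))
        = ((Nat.choose (N-t) (s-t):ℝ) * (N:ℝ)^t) * (((s-t:ℕ):ℝ) * (N:ℝ)) := by
      push_cast
      ring
    rw [step1]
    have hst_cast : ((s-t:ℕ):ℝ) * (N:ℝ) ≤ (s:ℝ) * ((N-t:ℕ):ℝ) := by
      have : (s-t) * N ≤ s * (N-t) := by
        rw [Nat.sub_mul, Nat.mul_sub]
        apply Nat.sub_le_sub_left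
        calc s * t = t * s := Nat.mul_comm _ _
          _ ≤ t * N := Nat.mul_le_mul_left _ hs
      exact_mod_cast this
    calc ((Nat.choose (N-t) (s-t):ℝ) * (N:ℝ)^t) * (((s-t:ℕ):ℝ) * (N:ℝ))
        ≤ ((Nat.choose N s : ℝ) * (s:ℝ)^t) * (((s-t:ℕ):ℝ) * (N:ℝ)) := by
          apply mul_le_mul_of_nonneg_right hih (by positivity)
      _ ≤ ((Nat.choose N s : ℝ) * (s:ℝ)^t) * ((s:ℝ) * ((N-t:ℕ):ℝ)) := by
          apply mul_le_mul_of_nonneg_left hst_cast (by positivity)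
      _ = ((N - t : ℕ):ℝ) * ((Nat.choose N s:ℝ) * (s:ℝ)^(t+1)) := by
          push_cast
          ring

lemma choose_le_choose_right {N : ℕ} : ∀ {i j : ℕ}, i ≤ j → 2*j ≤ N →
    N.choose i ≤ N.choose j := by
  intro i j
  induction j with
  | zero => intro h _; interval_cases i; rfl
  | succ j ihj =>
    intro hij hj
    rcases Nat.eq_or_lt_of_le hij with h | h
    · rw [h]
    · have h1 : i ≤ j := by omega
      have h2 : 2*j ≤ N := by omega
      apply (ihj h1 h2).trans
      have hkey := Nat.choose_succ_right_eq N j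
      have h3 : j + 1 ≤ N - j := by omega
      have h4 : N.choose j * (j+1) ≤ N.choose j * (N - j) := Nat.mul_le_mul_left _ h3
      rw [← hkey] at h4
      exact Nat.le_of_mul_le_mul_right h4 (by omega)

end Stmt19
namespace Stmt19

lemma card_MonIdx_le (m d : ℕ) (hd : 2*d ≤ m) :
    Fintype.card (MonIdx m d) ≤ (d+1) * Nat.choose m d := by
  classical
  rw [Fintype.card_subtype]
  have hsub : (Finset.univ.filter (fun T : Finset (Fin m) => T.card ≤ d))
      ⊆ (Finset.range (d+1)).biUnion (fun i => Finset.powersetCard i Finset.univ) := by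
    intro T hT
    simp only [Finset.mem_filter] at hT
    exact Finset.mem_biUnion.mpr ⟨T.card, Finset.mem_range.mpr (by omega),
      Finset.mem_powersetCard.mpr ⟨Finset.subset_univ _, rfl⟩⟩
  calc (Finset.univ.filter (fun T : Finset (Fin m) => T.card ≤ d)).card
      ≤ ∑ i ∈ Finset.range (d+1),
          (Finset.powersetCard i (Finset.univ : Finset (Fin m))).card :=
        (Finset.card_le_card hsub).trans Finset.card_biUnion_le
    _ = ∑ i ∈ Finset.range (d+1), Nat.choose m i := by
        apply Finset.sum_congr rfl
        intro i _
        rw [Finset.card_powersetCard]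
        simp
    _ ≤ ∑ _i ∈ Finset.range (d+1), Nat.choose m d := by
        apply Finset.sum_le_sum
        intro i hi
        exact choose_le_choose_right (by
          have := Finset.mem_range.mp hi; omega) hd
    _ = (d+1) * Nat.choose m d := by
        rw [Finset.sum_const, Finset.card_range, smul_eq_mul]

lemma K_le (n : ℕ) (hn : 1000 ≤ n) :
    Fintype.card (MonIdx (3*n) (n/100)) ≤ 2^(12*(n/100) + 2) := by
  set d := n/100 with hd
  have h2d : 2*d ≤ 3*n := by omega
  have hd1 : 1 ≤ d := by omega
  have h1 : (Nat.choose (3*n) d : ℝ) ≤ ((1800:ℕ)^d : ℕ) := by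
    calc (Nat.choose (3*n) d : ℝ) ≤ ((3*((3*n:ℕ):ℝ))/d)^d := choose_upper _ _ hd1
      _ ≤ (1800:ℝ)^d := by
          apply pow_le_pow_left₀ (by positivity)
          rw [div_le_iff₀ (by exact_mod_cast hd1)]
          have hnat : 9*n ≤ 1800 * d := by omega
          calc 3*((3*n:ℕ):ℝ) = ((9*n : ℕ):ℝ) := by push_cast; ring
            _ ≤ ((1800*d : ℕ):ℝ) := by exact_mod_cast hnat
            _ = 1800*(d:ℝ) := by push_cast; ring
      _ = ((1800:ℕ)^d : ℕ) := by push_cast; ring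
  have h2 : Nat.choose (3*n) d ≤ 1800^d := by exact_mod_cast h1
  calc Fintype.card (MonIdx (3*n) d) ≤ (d+1) * Nat.choose (3*n) d := card_MonIdx_le _ _ h2d
    _ ≤ (d+1) * 1800^d := Nat.mul_le_mul_left _ h2
    _ ≤ 2^(d+2) * 2^(11*d) := by
        apply Nat.mul_le_mul
        · have h3 := Nat.lt_two_pow_self (n := d)
          have h4 : (2:ℕ)^d ≤ 2^(d+2) := Nat.pow_le_pow_right (by norm_num) (by omega)
          omega
        · calc (1800:ℕ)^d ≤ 2048^d := Nat.pow_le_pow_left (by norm_num) d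
            _ = 2^(11*d) := by
              rw [show (2048:ℕ) = 2^11 by norm_num, ← pow_mul]
    _ = 2^(12*d + 2) := by
        rw [← pow_add]
        congr 1
        omega

lemma n_le_two_pow_div10 (n : ℕ) (hn : 1000 ≤ n) : n ≤ 2^(n/10) := by
  have key : ∀ j, 9 ≤ j → 10*(j+1) ≤ 2^j := by
    intro j
    induction j with
    | zero => omega
    | succ j ihj =>
      intro hj
      rcases Nat.eq_or_lt_of_le hj with h | h
      · rw [← h]; norm_num
      · have := ihj (by omega)
        rw [pow_succ]
        omega
  have h1 : 9 ≤ n/10 := by omega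
  have := key (n/10) h1
  omega

/-- The main numerical inequality. -/
lemma main_num (n : ℕ) (hn : 1000 ≤ n) :
    Fintype.card (Fin n → (MonIdx (3*n) (n/100) → F2)) *
      (Nat.choose (2^(2*(n/2) - (9*n)/20)) (2^((9*n)/20)) *
       Nat.choose (2^n - 2^((9*n)/20)) (2^(n/2) - 2^((9*n)/20)))
      < Nat.choose (2^n) (2^(n/2)) := by
  classical
  set d := n/100 with hd
  set al := n/2 with hal
  set ta := (9*n)/20 with hta
  set K := Fintype.card (MonIdx (3*n) d) with hK
  set s := 2^al with hs
  set t := 2^ta with ht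
  set N := 2^n with hN
  set W := 2^(2*al - ta) with hW
  have hts : t ≤ s := by
    apply Nat.pow_le_pow_right (by norm_num)
    omega
  have hsN : s ≤ N := by
    apply Nat.pow_le_pow_right (by norm_num)
    omega
  have ht1 : 1 ≤ t := Nat.one_le_two_pow
  have hCC : Fintype.card (Fin n → (MonIdx (3*n) d → F2)) = 2^(K*n) := by
    rw [show Fintype.card (Fin n → (MonIdx (3*n) d → F2))
        = (Fintype.card (MonIdx (3*n) d → F2))^n from by
      rw [Fintype.card_fun]; simp]
    rw [show Fintype.card (MonIdx (3*n) d → F2) = 2^K from by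
      rw [Fintype.card_fun]; simp [ZMod, hK]]
    rw [← pow_mul]
  set u := 2*ta + n - 3*al - 2 with hu
  -- key nat bound : K*n < u*t
  have hKn : K*n < u*t := by
    have h1 : K ≤ 2^(12*d+2) := K_le n hn
    have h2 : n ≤ 2^(n/10) := n_le_two_pow_div10 n hn
    have h3 : 12*d+2+n/10 < ta := by omega
    calc K*n ≤ 2^(12*d+2) * 2^(n/10) := Nat.mul_le_mul h1 h2
      _ = 2^(12*d+2+n/10) := by rw [← pow_add]
      _ < 2^ta := Nat.pow_lt_pow_right (by norm_num) h3
      _ = 1 * t := by rw [one_mul, ht]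
      _ ≤ u * t := Nat.mul_le_mul_right _ (by omega)
  have hWfrac : 3*W*s*2^u ≤ N*t := by
    have hE : ((2*al - ta) + al + u) + 2 ≤ n + ta := by omega
    calc 3*W*s*2^u = 3*2^(((2*al-ta)+al)+u) := by
          rw [hW, hs, pow_add, pow_add]; ring
      _ ≤ 2^2 * 2^(((2*al-ta)+al)+u) := Nat.mul_le_mul_right _ (by norm_num)
      _ = 2^((((2*al-ta)+al)+u)+2) := by rw [← pow_add]; ring_nf
      _ ≤ 2^(n+ta) := Nat.pow_le_pow_right (by norm_num) hE
      _ = N*t := by rw [hN, ht, pow_add]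
  have hCns_pos : (0:ℝ) < (Nat.choose N s : ℝ) := by
    exact_mod_cast Nat.choose_pos hsN
  rw [hCC]
  rw [← Nat.cast_lt (α := ℝ)]
  push_cast
  have hN_pos : (0:ℝ) < (N:ℝ) := by
    have : 0 < N := Nat.pow_pos (n := n) (by norm_num)
    exact_mod_cast this
  have ht_pos : (0:ℝ) < (t:ℝ) := by exact_mod_cast ht1
  have hNt_pos : (0:ℝ) < (N:ℝ)^t := by positivity
  apply lt_of_mul_lt_mul_right ?_ (le_of_lt hNt_pos)
  have hA := chooseRatio N s hsN t hts
  have hB := choose_upper W t ht1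
  have hkey : (2:ℝ)^(K*n) * (((3*(W:ℝ))/t) * (s:ℝ))^t < (N:ℝ)^t := by
    have hfrac : ((3*(W:ℝ))/t) * (s:ℝ) ≤ (N:ℝ) / 2^u := by
      rw [div_mul_eq_mul_div, div_le_div_iff₀ ht_pos (by positivity)]
      exact_mod_cast hWfrac
    calc (2:ℝ)^(K*n) * (((3*(W:ℝ))/t) * (s:ℝ))^t
        ≤ (2:ℝ)^(K*n) * (((N:ℝ)/2^u)^t) := by
          apply mul_le_mul_of_nonneg_left
            (pow_le_pow_left₀ (by positivity) hfrac t) (by positivity)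
      _ = ((2:ℝ)^(K*n) * (N:ℝ)^t) / ((2:ℝ)^u)^t := by
          rw [div_pow]; ring
      _ < (N:ℝ)^t := by
          rw [div_lt_iff₀ (by positivity)]
          have h5 : (2:ℝ)^(K*n) < ((2:ℝ)^u)^t := by
            rw [← pow_mul]
            apply pow_lt_pow_right₀ (by norm_num) hKn
          calc (2:ℝ)^(K*n) * (N:ℝ)^t < ((2:ℝ)^u)^t * (N:ℝ)^t :=
                mul_lt_mul_of_pos_right h5 hNt_pos
            _ = (N:ℝ)^t * ((2:ℝ)^u)^t := by ring
  calc (2:ℝ)^(K*n) * ((Nat.choose W t:ℝ) * (Nat.choose (N-t) (s-t):ℝ)) * (N:ℝ)^t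
      = (2:ℝ)^(K*n) * (Nat.choose W t:ℝ) * ((Nat.choose (N-t) (s-t):ℝ) * (N:ℝ)^t) := by
        ring
    _ ≤ (2:ℝ)^(K*n) * (Nat.choose W t:ℝ) * ((Nat.choose N s:ℝ) * (s:ℝ)^t) := by
        apply mul_le_mul_of_nonneg_left hA (by positivity)
    _ ≤ (2:ℝ)^(K*n) * (((3*(W:ℝ))/t)^t) * ((Nat.choose N s:ℝ) * (s:ℝ)^t) := by
        apply mul_le_mul_of_nonneg_right
          (mul_le_mul_of_nonneg_left hB (by positivity)) (by positivity)
    _ = (Nat.choose N s:ℝ) * ((2:ℝ)^(K*n) * (((3*(W:ℝ))/t) * (s:ℝ))^t) := by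
        rw [mul_pow]; ring
    _ < (Nat.choose N s:ℝ) * ((N:ℝ)^t) := mul_lt_mul_of_pos_left hkey hCns_pos

end Stmt19
namespace Stmt19

lemma markov_W {n m : ℕ} (g : (Fin m → F2) → Vn n) (s t : ℕ) (ht : 0 < t) (hs : 0 < s) :
    ((Finset.univ.filter (fun x : Vn n => (t:ℝ)/((s:ℝ)*s) < distOf g x)).card) * t
      ≤ s * s := by
  classical
  set θ : ℝ := (t:ℝ)/((s:ℝ)*s) with hθ
  set W := Finset.univ.filter (fun x : Vn n => θ < distOf g x) with hWdef
  have hs0 : (0:ℝ) < (s:ℝ) := by exact_mod_cast hs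
  have h1 : (W.card : ℝ) * θ ≤ 1 := by
    calc (W.card : ℝ) * θ = ∑ _x ∈ W, θ := by rw [Finset.sum_const, nsmul_eq_mul]
      _ ≤ ∑ x ∈ W, distOf g x := by
          apply Finset.sum_le_sum
          intro x hx
          rw [hWdef, Finset.mem_filter] at hx
          exact le_of_lt hx.2
      _ ≤ ∑ x, distOf g x := by
          apply Finset.sum_le_sum_of_subset_of_nonneg (Finset.subset_univ _)
          intro x _ _
          exact distOf_nonneg g x
      _ = 1 := sum_distOf g
  have h2 : ((W.card * t : ℕ) : ℝ) ≤ ((s*s : ℕ):ℝ) := by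
    push_cast
    rw [hθ] at h1
    rw [div_eq_mul_inv] at h1
    have := mul_le_mul_of_nonneg_right h1 (le_of_lt (mul_pos hs0 hs0))
    rw [one_mul] at this
    calc (W.card:ℝ) * t = (W.card:ℝ) * ((t:ℝ) * ((s:ℝ)*s)⁻¹) * ((s:ℝ)*s) := by
          field_simp
      _ ≤ (s:ℝ)*(s:ℝ) := by
          calc (W.card:ℝ) * ((t:ℝ) * ((s:ℝ)*s)⁻¹) * ((s:ℝ)*s)
              ≤ 1 * ((s:ℝ)*s) := by
                apply mul_le_mul_of_nonneg_right h1 (le_of_lt (mul_pos hs0 hs0))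
            _ = (s:ℝ)*(s:ℝ) := by ring
  exact_mod_cast h2

lemma min_sum_bound {n : ℕ} (S : Finset (Vn n)) (s t : ℕ) (hcard : S.card = s)
    (hs : 0 < s) (Y : Vn n → ℝ) (hY0 : ∀ x, 0 ≤ Y x)
    (W : Finset (Vn n)) (hWdef : ∀ x, x ∉ W → Y x ≤ (t:ℝ)/((s:ℝ)*s))
    (hSW : (S ∩ W).card ≤ t) :
    ∑ x, min (Y x) (if x ∈ S then ((s:ℝ))⁻¹ else 0) ≤ 2*(t:ℝ)/s := by
  classical
  have hs0 : (0:ℝ) < (s:ℝ) := by exact_mod_cast hs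
  have hsplit : ∑ x, min (Y x) (if x ∈ S then ((s:ℝ))⁻¹ else 0)
      = (∑ x ∈ S, min (Y x) (if x ∈ S then ((s:ℝ))⁻¹ else 0))
        + ∑ x ∈ Finset.univ \ S, min (Y x) (if x ∈ S then ((s:ℝ))⁻¹ else 0) := by
    rw [← Finset.sum_inter_add_sum_sdiff Finset.univ S
      (fun x => min (Y x) (if x ∈ S then ((s:ℝ))⁻¹ else 0)), Finset.univ_inter]
  rw [hsplit]
  have hoff : ∑ x ∈ Finset.univ \ S, min (Y x) (if x ∈ S then ((s:ℝ))⁻¹ else 0) = 0 := by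
    apply Finset.sum_eq_zero
    intro x hx
    rw [Finset.mem_sdiff] at hx
    rw [if_neg hx.2]
    exact min_eq_right (hY0 x)
  rw [hoff, add_zero]
  have hsplit2 : ∑ x ∈ S, min (Y x) (if x ∈ S then ((s:ℝ))⁻¹ else 0)
      = (∑ x ∈ S ∩ W, min (Y x) (if x ∈ S then ((s:ℝ))⁻¹ else 0))
        + ∑ x ∈ S \ W, min (Y x) (if x ∈ S then ((s:ℝ))⁻¹ else 0) :=
    (Finset.sum_inter_add_sum_sdiff S W _).symm
  rw [hsplit2]
  have h1 : ∑ x ∈ S ∩ W, min (Y x) (if x ∈ S then ((s:ℝ))⁻¹ else 0) ≤ (t:ℝ)/s := by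
    calc ∑ x ∈ S ∩ W, min (Y x) (if x ∈ S then ((s:ℝ))⁻¹ else 0)
        ≤ ∑ x ∈ S ∩ W, ((s:ℝ))⁻¹ := by
          apply Finset.sum_le_sum
          intro x hx
          rw [if_pos (Finset.mem_inter.mp hx).1]
          exact min_le_right _ _
      _ = ((S ∩ W).card : ℝ) * ((s:ℝ))⁻¹ := by rw [Finset.sum_const, nsmul_eq_mul]
      _ ≤ (t:ℝ) * ((s:ℝ))⁻¹ := by
          apply mul_le_mul_of_nonneg_right _ (by positivity)
          exact_mod_cast hSW
      _ = (t:ℝ)/s := by rw [div_eq_mul_inv]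
  have h2 : ∑ x ∈ S \ W, min (Y x) (if x ∈ S then ((s:ℝ))⁻¹ else 0) ≤ (t:ℝ)/s := by
    calc ∑ x ∈ S \ W, min (Y x) (if x ∈ S then ((s:ℝ))⁻¹ else 0)
        ≤ ∑ x ∈ S \ W, (t:ℝ)/((s:ℝ)*s) := by
          apply Finset.sum_le_sum
          intro x hx
          exact (min_le_left _ _).trans (hWdef x (Finset.mem_sdiff.mp hx).2)
      _ = ((S \ W).card : ℝ) * ((t:ℝ)/((s:ℝ)*s)) := by rw [Finset.sum_const, nsmul_eq_mul]
      _ ≤ (s:ℝ) * ((t:ℝ)/((s:ℝ)*s)) := by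
          apply mul_le_mul_of_nonneg_right _ (by positivity)
          have : (S \ W).card ≤ S.card := Finset.card_le_card Finset.sdiff_subset
          rw [hcard] at this
          exact_mod_cast this
      _ = (t:ℝ)/s := by field_simp
  calc _ ≤ (t:ℝ)/s + (t:ℝ)/s := add_le_add h1 h2
    _ = 2*(t:ℝ)/s := by ring

lemma sum_D {n : ℕ} (S : Finset (Vn n)) (s : ℕ) (hcard : S.card = s) (hs : 0 < s) :
    ∑ x : Vn n, (if x ∈ S then ((s:ℝ))⁻¹ else 0) = 1 := by
  classical
  rw [sum_ite_const (p := fun x => x ∈ S)]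
  rw [show Finset.univ.filter (fun x : Vn n => x ∈ S) = S from by
    ext x; simp]
  rw [hcard]
  have hs0 : ((s:ℝ)) ≠ 0 := by positivity
  field_simp

end Stmt19
theorem stmt19 : ∃ δ c : ℝ, 0 < δ ∧ 0 < c ∧
    ∃ n₀ : ℕ, ∀ n : ℕ, n₀ ≤ n →
      ∃ S : Finset (Fin n → Bool), S.Nonempty ∧
        ∀ X ∈ polySource (⌊δ * (n : ℝ)⌋₊) n,
          1 - (2 : ℝ) ^ (-(c * n))
            ≤ tv X (fun x => if x ∈ S then ((S.card : ℝ))⁻¹ else 0) := by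
  classical
  refine ⟨1/100, 1/100, by norm_num, by norm_num, 1000, ?_⟩
  intro n hn
  have hfloor : ⌊(1/100 : ℝ) * (n:ℝ)⌋₊ = n/100 := by
    rw [show (1/100:ℝ) * (n:ℝ) = (n:ℝ)/((100:ℕ):ℝ) from by push_cast; ring]
    rw [Nat.floor_div_natCast, Nat.floor_natCast]
  rw [hfloor]
  set d := n/100 with hd
  set al := n/2 with hal
  set ta := (9*n)/20 with hta
  set s := 2^al with hs_def
  set t := 2^ta with ht_def
  have hs_pos : 0 < s := Nat.pow_pos (by norm_num)
  have ht_pos : 0 < t := Nat.pow_pos (by norm_num)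
  set Yc : (Fin n → (Stmt19.MonIdx (3*n) d → Stmt19.F2)) → (Fin n → Bool) → ℝ :=
    fun c => Stmt19.distOf (Stmt19.fzP (fun i => Stmt19.Phipoly d (c i))) with hYc
  set Wfun : (Fin n → (Stmt19.MonIdx (3*n) d → Stmt19.F2)) → Finset (Stmt19.Vn n) :=
    fun c => Finset.univ.filter (fun x => (t:ℝ)/((s:ℝ)*s) < Yc c x) with hWfun
  obtain ⟨S, hScard, hSgood⟩ := Stmt19.exists_good _ Wfun (2^(2*al - ta)) s t
    (Nat.pow_le_pow_right (by norm_num) (by omega))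
    (Nat.pow_le_pow_right (by norm_num) (by omega))
    (fun c => by
      have hmk := Stmt19.markov_W (Stmt19.fzP (fun i => Stmt19.Phipoly d (c i))) s t
        ht_pos hs_pos
      have hss : s * s = 2^(2*al - ta) * t := by
        rw [hs_def, ht_def, ← pow_add, ← pow_add]
        congr 1
        omega
      rw [hss] at hmk
      exact Nat.le_of_mul_le_mul_right hmk ht_pos)
    (Stmt19.main_num n hn)
  refine ⟨S, ?_, ?_⟩
  · rw [← Finset.card_pos, hScard]; exact hs_pos
  intro X hX
  obtain ⟨r, hr, P, hPdeg, hXdef⟩ := hX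
  have hXd : X = Stmt19.distOf (Stmt19.fzP P) := by
    rw [hXdef]; exact Stmt19.source_eq_distOf P
  obtain ⟨Q, hQdeg, hQclose⟩ := Stmt19.lemmaA (m := 3*n) P hPdeg
  set c0 : Fin n → (Stmt19.MonIdx (3*n) d → Stmt19.F2) :=
    fun i T => MvPolynomial.coeff (Stmt19.sqF T.1) (Stmt19.ml (Q i)) with hc0
  have hPc : Stmt19.fzP (fun i => Stmt19.Phipoly d (c0 i)) = Stmt19.fzP Q := by
    rw [show (fun i => Stmt19.Phipoly d (c0 i)) = fun i => Stmt19.ml (Q i) from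
      funext fun i => Stmt19.rep d (Q i) (hQdeg i)]
    exact Stmt19.fz_ml Q
  have hYcQ : Yc c0 = Stmt19.distOf (Stmt19.fzP Q) := by rw [hYc]; simp only [hPc]
  set D : (Fin n → Bool) → ℝ := fun x => if x ∈ S then ((S.card : ℝ))⁻¹ else 0 with hD
  have hDs : D = fun x => if x ∈ S then ((s:ℝ))⁻¹ else 0 := by rw [hD, hScard]
  have hmin : ∑ x, min (Yc c0 x) (if x ∈ S then ((s:ℝ))⁻¹ else 0) ≤ 2*(t:ℝ)/s := by
    apply Stmt19.min_sum_bound S s t hScard hs_pos (Yc c0)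
      (fun x => by rw [hYc]; exact Stmt19.distOf_nonneg _ x) (Wfun c0)
    · intro x hx
      rw [hWfun] at hx
      simp only [Finset.mem_filter, Finset.mem_univ, true_and, not_lt] at hx
      exact hx
    · exact le_of_lt (hSgood c0)
  have hsumY : ∑ x, Yc c0 x = 1 := by rw [hYc]; exact Stmt19.sum_distOf _
  have hsumD : ∑ x, D x = 1 := by rw [hDs]; exact Stmt19.sum_D S s hScard hs_pos
  have htvYD : 1 - 2*(t:ℝ)/s ≤ tv (Yc c0) D := by
    rw [Stmt19.tv_eq_one_sub_min _ _ hsumY hsumD]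
    have h2 : ∑ x, min (Yc c0 x) (D x) ≤ 2*(t:ℝ)/s := by
      rw [hDs]; exact hmin
    linarith
  have htvXY : tv X (Yc c0) ≤ ((2:ℝ)^n)⁻¹ / 2 := by
    rw [hYcQ, hXd]
    unfold tv
    have h1 : (∑ x : Fin n → Bool,
          |Stmt19.distOf (Stmt19.fzP P) x - Stmt19.distOf (Stmt19.fzP Q) x|)
        = (∑ x : Fin n → Bool,
          |Stmt19.distOf (Stmt19.fzP Q) x - Stmt19.distOf (Stmt19.fzP P) x|) :=
      Finset.sum_congr rfl fun x _ => abs_sub_comm _ _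
    rw [h1]
    have h2 : (∑ x : Fin n → Bool,
        |Stmt19.distOf (Stmt19.fzP Q) x - Stmt19.distOf (Stmt19.fzP P) x|)
        ≤ ((2:ℝ)^n)⁻¹ := by
      have hsq := hQclose
      have hnn : (0:ℝ) ≤ ∑ x : Fin n → Bool,
          |Stmt19.distOf (Stmt19.fzP Q) x - Stmt19.distOf (Stmt19.fzP P) x| :=
        Finset.sum_nonneg fun x _ => abs_nonneg _
      have heq : (2:ℝ)^n / 2^(3*n) = (((2:ℝ)^n)⁻¹)^2 := by
        rw [show 3*n = n + (n + n) from by ring, pow_add, pow_add]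
        have h3 : ((2:ℝ)^n) ≠ 0 := by positivity
        field_simp
      rw [heq] at hsq
      have hpos : (0:ℝ) < ((2:ℝ)^n)⁻¹ := by positivity
      nlinarith [hsq, hnn, hpos]
    linarith
  have htri : tv (Yc c0) D ≤ tv (Yc c0) X + tv X D := Stmt19.tv_triangle _ _ _
  have hcomm : tv (Yc c0) X = tv X (Yc c0) := Stmt19.tv_comm _ _
  have hfinal : 2*(t:ℝ)/s + ((2:ℝ)^n)⁻¹/2 ≤ (2:ℝ)^(-((1/100:ℝ) * n)) := by
    set q := n/100 + 1 with hq
    have hs0 : (0:ℝ) < (s:ℝ) := by exact_mod_cast hs_pos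
    have hge : ((2:ℝ)^(q:ℕ))⁻¹ ≤ (2:ℝ)^(-((1/100:ℝ)*n)) := by
      rw [Real.rpow_neg (by norm_num)]
      apply inv_anti₀ (by positivity)
      rw [← Real.rpow_natCast 2 q]
      apply (Real.rpow_le_rpow_left_iff (by norm_num)).mpr
      have h2 : n < 100*(n/100) + 100 := by omega
      have h3 : (n:ℝ) < 100*((n/100:ℕ):ℝ) + 100 := by exact_mod_cast h2
      have h4 : ((q:ℕ):ℝ) = ((n/100:ℕ):ℝ) + 1 := by rw [hq]; push_cast; ring
      rw [h4]
      linarith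
    apply le_trans _ hge
    have hhalf1 : 2*(t:ℝ)/s ≤ ((2:ℝ)^q)⁻¹/2 := by
      have hnat : (4 * t * 2^q : ℕ) ≤ s := by
        calc 4 * t * 2^q = 2^(ta + q + 2) := by
              rw [ht_def, pow_add, pow_add]; ring
          _ ≤ 2^al := Nat.pow_le_pow_right (by norm_num) (by omega)
      have hreal : (4:ℝ) * (t:ℝ) * (2:ℝ)^q ≤ (s:ℝ) := by
        calc (4:ℝ) * (t:ℝ) * (2:ℝ)^q = ((4 * t * 2^q : ℕ):ℝ) := by push_cast; ring
          _ ≤ (s:ℝ) := by exact_mod_cast hnat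
      rw [div_le_div_iff₀ hs0 (by norm_num : (0:ℝ) < 2)]
      rw [inv_mul_eq_div, le_div_iff₀ (by positivity : (0:ℝ) < (2:ℝ)^q)]
      nlinarith [hreal]
    have hhalf2 : ((2:ℝ)^n)⁻¹/2 ≤ ((2:ℝ)^q)⁻¹/2 := by
      have hmono : ((2:ℝ)^n)⁻¹ ≤ ((2:ℝ)^q)⁻¹ := by
        apply inv_anti₀ (by positivity)
        apply pow_le_pow_right₀ (by norm_num)
        omega
      linarith
    linarith
  have hgoal : 1 - (2:ℝ)^(-((1/100:ℝ) * n)) ≤ tv X D := by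
    linarith [htvYD, htri, hcomm ▸ htvXY, htvXY, hfinal]
  exact hgoal
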